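/- Let G be an interval graph and let S and S' be c-colorable vertex sets of size at least k in G. If neither S nor S' is a maximal c-colorable set of size exactly k in the induced subgraph G[S ∪ S'], then the minimum length of a TAR(k)-reconfiguration sequence between S and S' equals |S △ S'|. -/

import Mathlib

open Finset

variable {V : Type*}

/-- `S` is a `c`-colorable vertex set in `G`. -/
def ColSet (G : SimpleGraph V) (c : ℕ) (S : Finset V) : Prop :=
  (G.induce (S : Set V)).Colorable c

/-- One TAR(k) step between `c`-colorable sets. -/
def TARStep (G : SimpleGraph V) (c k : ℕ) [DecidableEq V] (A B : Finset V) : Prop :=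
  ColSet G c A ∧ ColSet G c B ∧ k ≤ A.card ∧ k ≤ B.card ∧ (symmDiff A B).card = 1

/-- One TJ step between `c`-colorable sets. -/
def TJStep (G : SimpleGraph V) (c : ℕ) [DecidableEq V] (A B : Finset V) : Prop :=
  ColSet G c A ∧ ColSet G c B ∧ (A \ B).card = 1 ∧ (B \ A).card = 1

/-- `l` is a TAR(k)-reconfiguration sequence from `S` to `S'`. -/
def TARSeq (G : SimpleGraph V) (c k : ℕ) [DecidableEq V] (S S' : Finset V)
    (l : List (Finset V)) : Prop :=
  l.head? = some S ∧ l.getLast? = some S' ∧ l.Chain' (TARStep G c k)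

def TJSeq (G : SimpleGraph V) (c : ℕ) [DecidableEq V] (S S' : Finset V)
    (l : List (Finset V)) : Prop :=
  l.head? = some S ∧ l.getLast? = some S' ∧ l.Chain' (TJStep G c)

def TARReach (G : SimpleGraph V) (c k : ℕ) [DecidableEq V] (S S' : Finset V) : Prop :=
  ∃ l, TARSeq G c k S S' l

def TJReach (G : SimpleGraph V) (c : ℕ) [DecidableEq V] (S S' : Finset V) : Prop :=
  ∃ l, TJSeq G c S S' l

/-- Length of a shortest TAR(k)-sequence (number of steps), `⊤` if none exists. -/
noncomputable def TARDist (G : SimpleGraph V) (c k : ℕ) [DecidableEq V]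
    (S S' : Finset V) : ℕ∞ :=
  sInf {n : ℕ∞ | ∃ l, TARSeq G c k S S' l ∧ (l.length : ℕ∞) = n + 1}

noncomputable def TJDist (G : SimpleGraph V) (c : ℕ) [DecidableEq V]
    (S S' : Finset V) : ℕ∞ :=
  sInf {n : ℕ∞ | ∃ l, TJSeq G c S S' l ∧ (l.length : ℕ∞) = n + 1}

/-- `S` is a maximal `c`-colorable set among subsets of `U`, of size exactly `k`
(`S` is "locked" in `G[U]`). -/
def LockedIn (G : SimpleGraph V) (c k : ℕ) (U S : Finset V) : Prop :=
  S.card = k ∧ ColSet G c S ∧ S ⊆ U ∧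
    ∀ T ⊆ U, ColSet G c T → S ⊆ T → T = S

/-- `S` is locked in `G` itself. -/
def Locked [Fintype V] (G : SimpleGraph V) (c k : ℕ) (S : Finset V) : Prop :=
  LockedIn G c k Finset.univ S

/-- `G` is an interval graph. -/
def IsIntervalGraph (G : SimpleGraph V) : Prop :=
  ∃ l r : V → ℝ, (∀ v, l v ≤ r v) ∧
    ∀ u v, G.Adj u v ↔ u ≠ v ∧ max (l u) (l v) ≤ min (r u) (r v)

/-- `G` is perfect: every induced subgraph has chromatic number equal to its
clique number, stated via the colorability/clique-free characterization. -/
def IsPerfect (G : SimpleGraph V) : Prop :=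
  ∀ (S : Set V) (c : ℕ), (G.induce S).Colorable c ↔ (G.induce S).CliqueFree (c + 1)

section AuxProof
section ColorAux
variable {V : Type*} [DecidableEq V] {G : SimpleGraph V} {c : ℕ}

def ProperOn (G : SimpleGraph V) (c : ℕ) (S : Finset V) (f : V → ℕ) : Prop :=
  (∀ v ∈ S, f v < c) ∧ ∀ u ∈ S, ∀ w ∈ S, G.Adj u w → f u ≠ f w

lemma colSet_iff_properOn {S : Finset V} :
    ColSet G c S ↔ ∃ f, ProperOn G c S f := by
  constructor
  · rintro ⟨C⟩
    classical
    refine ⟨fun v => if h : v ∈ (S : Set V) then (C ⟨v, h⟩).val else 0, fun v hv => ?_, ?_⟩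
    · have hv' : v ∈ (S : Set V) := hv
      simp only [dif_pos hv']
      exact (C ⟨v, hv'⟩).isLt
    · intro u hu w hw hadj
      have hu' : u ∈ (S : Set V) := hu
      have hw' : w ∈ (S : Set V) := hw
      simp only [dif_pos hu', dif_pos hw']
      have : (G.induce (S : Set V)).Adj ⟨u, hu'⟩ ⟨w, hw'⟩ := hadj
      have := C.valid this
      exact fun h => this (Fin.ext h)
  · rintro ⟨f, hf, hf2⟩
    constructor
    exact SimpleGraph.Coloring.mk
      (fun v => ⟨f v.1, hf v.1 v.2⟩)
      (by
        rintro ⟨u, hu⟩ ⟨w, hw⟩ hadj h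
        exact hf2 u hu w hw hadj (by simpa using congrArg Fin.val h))

lemma ColSet.mono {S T : Finset V} (hTS : T ⊆ S) (h : ColSet G c S) : ColSet G c T := by
  rw [colSet_iff_properOn] at h ⊢
  obtain ⟨f, hf, hf2⟩ := h
  exact ⟨f, fun v hv => hf v (hTS hv), fun u hu w hw => hf2 u (hTS hu) w (hTS hw)⟩

end ColorAux


section IntervalAux
variable {V : Type*} [DecidableEq V] {G : SimpleGraph V} {c k : ℕ} {l r : V → ℝ}

/-- number of intervals of `S` covering point `x` -/
noncomputable def cov (l r : V → ℝ) (S : Finset V) (x : ℝ) : ℕ :=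
  (S.filter (fun v => l v ≤ x ∧ x ≤ r v)).card

lemma cov_mono {S T : Finset V} (h : S ⊆ T) (x : ℝ) : cov l r S x ≤ cov l r T x :=
  Finset.card_le_card (Finset.filter_subset_filter _ h)


variable {V : Type*} [DecidableEq V] {G : SimpleGraph V} {c : ℕ} {l r : V → ℝ}

lemma cov_le_of_colset
    (hadj : ∀ u v, G.Adj u v ↔ u ≠ v ∧ max (l u) (l v) ≤ min (r u) (r v))
    {S : Finset V} (h : ColSet G c S) (x : ℝ) : cov l r S x ≤ c := by
  obtain ⟨f, hf, hf2⟩ := colSet_iff_properOn.mp h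
  have : cov l r S x = (S.filter (fun v => l v ≤ x ∧ x ≤ r v)).card := rfl
  rw [this]
  have hinj : Set.InjOn f (S.filter (fun v => l v ≤ x ∧ x ≤ r v)) := by
    intro u hu w hw hfe
    simp only [Finset.coe_filter, Set.mem_setOf_eq, Finset.mem_coe] at hu hw
    by_contra hne
    have hadj' : G.Adj u w := by
      rw [hadj]
      exact ⟨hne, le_trans (max_le hu.2.1 hw.2.1) (le_min hu.2.2 hw.2.2)⟩
    exact hf2 u hu.1 w hw.1 hadj' hfe
  calc (S.filter (fun v => l v ≤ x ∧ x ≤ r v)).card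
      = ((S.filter (fun v => l v ≤ x ∧ x ≤ r v)).image f).card :=
        (Finset.card_image_of_injOn hinj).symm
    _ ≤ (Finset.range c).card := by
        apply Finset.card_le_card
        intro i hi
        simp only [Finset.mem_image] at hi
        obtain ⟨v, hv, rfl⟩ := hi
        exact Finset.mem_range.mpr (hf v (Finset.mem_of_mem_filter v hv))
    _ = c := Finset.card_range c

lemma colset_of_cov
    (hlr : ∀ v, l v ≤ r v)
    (hadj : ∀ u v, G.Adj u v ↔ u ≠ v ∧ max (l u) (l v) ≤ min (r u) (r v))
    {S : Finset V} (h : ∀ x, cov l r S x ≤ c) : ColSet G c S := by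
  rw [colSet_iff_properOn]
  suffices H : ∀ n (S : Finset V), S.card = n → (∀ x, cov l r S x ≤ c) → ∃ f, ProperOn G c S f from
    H S.card S rfl h
  clear h S
  intro n
  induction n using Nat.strong_induction_on with
  | _ n IH =>
  intro S hn h
  rcases Finset.eq_empty_or_nonempty S with rfl | hSne
  · exact ⟨fun _ => 0, fun v hv => absurd hv (Finset.notMem_empty v), fun u hu => absurd hu (Finset.notMem_empty u)⟩
  · obtain ⟨v, hvS, hvmax⟩ := Finset.exists_max_image S l hSne
    set S' := S.erase v with hS'
    have hsub : S' ⊆ S := Finset.erase_subset v S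
    obtain ⟨f', hf', hf'2⟩ := IH S'.card (by rw [← hn]; exact Finset.card_lt_card (Finset.erase_ssubset hvS)) S' rfl (fun x => le_trans (cov_mono hsub x) (h x))
    -- neighbors of v among S' all cover the point l v
    set N := S'.filter (fun u => l u ≤ l v ∧ l v ≤ r u) with hN
    have hNcard : N.card < c := by
      have hvmem : v ∈ S.filter (fun u => l u ≤ l v ∧ l v ≤ r u) :=
        Finset.mem_filter.mpr ⟨hvS, le_refl _, hlr v⟩
      have : N = (S.filter (fun u => l u ≤ l v ∧ l v ≤ r u)).erase v := by
        rw [hN, hS', Finset.filter_erase]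
      rw [this]
      have hcard : (S.filter (fun u => l u ≤ l v ∧ l v ≤ r u)).card ≤ c := h (l v)
      have hc1 : 1 ≤ (S.filter (fun u => l u ≤ l v ∧ l v ≤ r u)).card :=
        Finset.card_pos.mpr ⟨v, hvmem⟩
      have := Finset.card_erase_of_mem hvmem
      omega
    have hused : (N.image f').card < c := lt_of_le_of_lt Finset.card_image_le hNcard
    have havail : ((Finset.range c) \ (N.image f')).Nonempty := by
      apply Finset.card_pos.mp
      have h1 : (Finset.range c).card ≤ ((Finset.range c) \ (N.image f')).card + (N.image f').card :=
        Finset.card_le_card_sdiff_add_card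
      rw [Finset.card_range] at h1
      omega
    obtain ⟨i, hi⟩ := havail
    have hiR : i < c := Finset.mem_range.mp (Finset.mem_sdiff.mp hi).1
    have hiN : i ∉ N.image f' := (Finset.mem_sdiff.mp hi).2
    classical
    refine ⟨fun u => if u = v then i else f' u, fun u hu => ?_, ?_⟩
    · by_cases hu' : u = v
      · simp [hu', hiR]
      · simp only [if_neg hu']
        exact hf' u (Finset.mem_erase.mpr ⟨hu', hu⟩)
    · intro u hu w hw hadj'
      have hne : u ≠ w := G.ne_of_adj hadj'
      by_cases hu' : u = v
      · subst hu'
        have hw' : w ≠ u := fun h => hne h.symm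
        simp only [if_pos rfl, if_neg hw']
        have hwN : w ∈ N := by
          rw [hN]
          refine Finset.mem_filter.mpr ⟨Finset.mem_erase.mpr ⟨hw', hw⟩, hvmax w hw, ?_⟩
          have := (hadj u w).mp hadj'
          calc l u = max (l u) (l w) := (max_eq_left (hvmax w hw)).symm
            _ ≤ min (r u) (r w) := this.2
            _ ≤ r w := min_le_right _ _
        intro hcon
        exact hiN (Finset.mem_image.mpr ⟨w, hwN, hcon.symm⟩)
      · by_cases hw' : w = v
        · subst hw'
          simp only [if_neg hu', if_pos rfl]
          have huN : u ∈ N := by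
            rw [hN]
            refine Finset.mem_filter.mpr ⟨Finset.mem_erase.mpr ⟨hu', hu⟩, hvmax u hu, ?_⟩
            have := (hadj u w).mp hadj'
            calc l w = max (l u) (l w) := (max_eq_right (hvmax u hu)).symm
              _ ≤ min (r u) (r w) := this.2
              _ ≤ r u := min_le_left _ _
          intro hcon
          exact hiN (Finset.mem_image.mpr ⟨u, huN, hcon⟩)
        · simp only [if_neg hu', if_neg hw']
          exact hf'2 u (Finset.mem_erase.mpr ⟨hu', hu⟩) w (Finset.mem_erase.mpr ⟨hw', hw⟩) hadj'



lemma exists_min_tight (S : Finset V) (hS : ∀ x, cov l r S x ≤ c) (v : V) (x₀ : ℝ)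
    (hx₀ : cov l r S x₀ = c ∧ l v ≤ x₀ ∧ x₀ ≤ r v) :
    ∃ av, (cov l r S av = c ∧ l v ≤ av ∧ av ≤ r v) ∧
      ∀ x, (cov l r S x = c ∧ l v ≤ x ∧ x ≤ r v) → av ≤ x := by
  classical
  set P : ℝ → Prop := fun y => cov l r S y = c ∧ l v ≤ y ∧ y ≤ r v with hP
  have key : ∀ x, P x → ∃ y ∈ (insert (l v) (S.image l)).filter (fun y => P y), y ≤ x := by
    intro x hx
    set D := (insert (l v) (S.image l)).filter (fun y => y ≤ x) with hD
    have hDne : D.Nonempty := ⟨l v, Finset.mem_filter.mpr ⟨Finset.mem_insert_self _ _, hx.2.1⟩⟩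
    set y := D.max' hDne with hy
    have hyD : y ∈ D := D.max'_mem hDne
    have hyx : y ≤ x := (Finset.mem_filter.mp hyD).2
    have hly : l v ≤ y := D.le_max' (l v) (Finset.mem_filter.mpr ⟨Finset.mem_insert_self _ _, hx.2.1⟩)
    have hcovy : cov l r S y = c := by
      have hsub : S.filter (fun u => l u ≤ x ∧ x ≤ r u) ⊆ S.filter (fun u => l u ≤ y ∧ y ≤ r u) := by
        intro u hu
        obtain ⟨huS, hul, hur⟩ := Finset.mem_filter.mp hu |>.imp id (fun h => h)
        have h1 : l u ≤ x := (Finset.mem_filter.mp hu).2.1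
        have h2 : x ≤ r u := (Finset.mem_filter.mp hu).2.2
        have : l u ∈ D := Finset.mem_filter.mpr
          ⟨Finset.mem_insert.mpr (Or.inr (Finset.mem_image_of_mem l (Finset.mem_filter.mp hu).1)), h1⟩
        exact Finset.mem_filter.mpr ⟨(Finset.mem_filter.mp hu).1, D.le_max' _ this, le_trans hyx h2⟩
      have h1 : cov l r S x ≤ cov l r S y := Finset.card_le_card hsub
      have h2 := hS y
      rw [hx.1] at h1
      omega
    exact ⟨y, Finset.mem_filter.mpr ⟨(Finset.mem_filter.mp hyD).1, hcovy, hly, le_trans hyx hx.2.2⟩, hyx⟩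
  obtain ⟨y₀, hy₀, _⟩ := key x₀ hx₀
  set C := (insert (l v) (S.image l)).filter (fun y => P y) with hC
  have hCne : C.Nonempty := ⟨y₀, hy₀⟩
  refine ⟨C.min' hCne, (Finset.mem_filter.mp (C.min'_mem hCne)).2, ?_⟩
  intro x hx
  obtain ⟨y, hyC, hyx⟩ := key x hx
  exact le_trans (C.min'_le y hyC) hyx

lemma exists_max_tight (S : Finset V) (hS : ∀ x, cov l r S x ≤ c) (v : V) (x₀ : ℝ)
    (hx₀ : cov l r S x₀ = c ∧ l v ≤ x₀ ∧ x₀ ≤ r v) :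
    ∃ bv, (cov l r S bv = c ∧ l v ≤ bv ∧ bv ≤ r v) ∧
      ∀ x, (cov l r S x = c ∧ l v ≤ x ∧ x ≤ r v) → x ≤ bv := by
  classical
  set P : ℝ → Prop := fun y => cov l r S y = c ∧ l v ≤ y ∧ y ≤ r v with hP
  have key : ∀ x, P x → ∃ y ∈ (insert (r v) (S.image r)).filter (fun y => P y), x ≤ y := by
    intro x hx
    set D := (insert (r v) (S.image r)).filter (fun y => x ≤ y) with hD
    have hDne : D.Nonempty := ⟨r v, Finset.mem_filter.mpr ⟨Finset.mem_insert_self _ _, hx.2.2⟩⟩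
    set y := D.min' hDne with hy
    have hyD : y ∈ D := D.min'_mem hDne
    have hyx : x ≤ y := (Finset.mem_filter.mp hyD).2
    have hry : y ≤ r v := D.min'_le (r v) (Finset.mem_filter.mpr ⟨Finset.mem_insert_self _ _, hx.2.2⟩)
    have hcovy : cov l r S y = c := by
      have hsub : S.filter (fun u => l u ≤ x ∧ x ≤ r u) ⊆ S.filter (fun u => l u ≤ y ∧ y ≤ r u) := by
        intro u hu
        have h1 : l u ≤ x := (Finset.mem_filter.mp hu).2.1
        have h2 : x ≤ r u := (Finset.mem_filter.mp hu).2.2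
        have : r u ∈ D := Finset.mem_filter.mpr
          ⟨Finset.mem_insert.mpr (Or.inr (Finset.mem_image_of_mem r (Finset.mem_filter.mp hu).1)), h2⟩
        exact Finset.mem_filter.mpr ⟨(Finset.mem_filter.mp hu).1, le_trans h1 hyx, D.min'_le _ this⟩
      have h1 : cov l r S x ≤ cov l r S y := Finset.card_le_card hsub
      have h2 := hS y
      rw [hx.1] at h1
      omega
    exact ⟨y, Finset.mem_filter.mpr ⟨(Finset.mem_filter.mp hyD).1, hcovy, le_trans hx.2.1 hyx, hry⟩, hyx⟩
  obtain ⟨y₀, hy₀, _⟩ := key x₀ hx₀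
  set C := (insert (r v) (S.image r)).filter (fun y => P y) with hC
  have hCne : C.Nonempty := ⟨y₀, hy₀⟩
  refine ⟨C.max' hCne, (Finset.mem_filter.mp (C.max'_mem hCne)).2, ?_⟩
  intro x hx
  obtain ⟨y, hyC, hyx⟩ := key x hx
  exact le_trans hyx (C.le_max' y hyC)


lemma lemma_M (U W : Finset V) (a b : V → ℝ)
    (hab : ∀ v ∈ W, a v ≤ b v)
    (hM4 : ∀ v ∈ W, l v ≤ a v ∧ b v ≤ r v)
    (hM2 : ∀ v ∈ W, ∀ u ∈ U, l u ≤ a v → a v ≤ r u → r u < b v)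
    (hM3a : ∀ v ∈ W, (W.filter (fun w => l w ≤ a v ∧ a v ≤ r w)).card
      ≤ (U.filter (fun u => l u ≤ a v ∧ a v ≤ r u)).card)
    (hM3b : ∀ v ∈ W, (W.filter (fun w => l w ≤ b v ∧ b v ≤ r w)).card
      ≤ (U.filter (fun u => l u ≤ b v ∧ b v ≤ r u)).card)
    (hWne : W.Nonempty) : W.card < U.card := by
  classical
  -- Step 1: build an injective matching h : W → U with h v covering the point a v
  have key : ∀ n (W' : Finset V), W' ⊆ W → W'.card = n →
      ∃ h : V → V, Set.InjOn h W' ∧ ∀ v ∈ W', h v ∈ U ∧ l (h v) ≤ a v ∧ a v ≤ r (h v) := by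
    intro n
    induction n using Nat.strong_induction_on with
    | _ n IH =>
    intro W' hW'W hcard
    rcases Finset.eq_empty_or_nonempty W' with rfl | hne
    · exact ⟨id, Set.injOn_empty _ |>.mono (by simp), fun v hv => absurd hv (Finset.notMem_empty v)⟩
    · obtain ⟨v₀, hv₀, hv₀max⟩ := Finset.exists_max_image W' a hne
      set W'' := W'.erase v₀ with hW''
      have hsub : W'' ⊆ W' := Finset.erase_subset _ _
      have hlt : W''.card < n := by
        rw [← hcard]; exact Finset.card_lt_card (Finset.erase_ssubset hv₀)
      obtain ⟨h, hinj, hprop⟩ := IH W''.card hlt W'' (hsub.trans hW'W) rfl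
      set A := U.filter (fun u => l u ≤ a v₀ ∧ a v₀ ≤ r u) with hA
      set B := W.filter (fun w => l w ≤ a v₀ ∧ a v₀ ≤ r w) with hB
      have hBA : B.card ≤ A.card := hM3a v₀ (hW'W hv₀)
      set M' := W''.filter (fun w => h w ∈ A) with hM'
      have hMB : M' ⊆ B.erase v₀ := by
        intro w hw
        obtain ⟨hwW'', hhwA⟩ := Finset.mem_filter.mp hw
        have hwW : w ∈ W := hW'W (hsub hwW'')
        have hwne : w ≠ v₀ := (Finset.mem_erase.mp hwW'').1
        obtain ⟨hhwU, hlh, hrh⟩ := hprop w hwW''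
        have h1 : r (h w) < b w := hM2 w hwW (h w) hhwU hlh hrh
        have h2 : a v₀ ≤ r (h w) := (Finset.mem_filter.mp hhwA).2.2
        refine Finset.mem_erase.mpr ⟨hwne, Finset.mem_filter.mpr ⟨hwW, ?_, ?_⟩⟩
        · exact le_trans (hM4 w hwW).1 (hv₀max w (hsub hwW''))
        · exact le_trans h2 (le_trans (le_of_lt h1) (hM4 w hwW).2)
      have hv₀B : v₀ ∈ B := Finset.mem_filter.mpr
        ⟨hW'W hv₀, (hM4 v₀ (hW'W hv₀)).1, le_trans (hab v₀ (hW'W hv₀)) (hM4 v₀ (hW'W hv₀)).2⟩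
      have hM'card : M'.card < A.card := by
        have h1 : M'.card ≤ (B.erase v₀).card := Finset.card_le_card hMB
        have h2 : (B.erase v₀).card = B.card - 1 := Finset.card_erase_of_mem hv₀B
        have h3 : 1 ≤ B.card := Finset.card_pos.mpr ⟨v₀, hv₀B⟩
        omega
      have himg : A ∩ (W''.image h) ⊆ M'.image h := by
        intro u hu
        obtain ⟨huA, huimg⟩ := Finset.mem_inter.mp hu
        obtain ⟨w, hwW'', rfl⟩ := Finset.mem_image.mp huimg
        exact Finset.mem_image_of_mem h (Finset.mem_filter.mpr ⟨hwW'', huA⟩)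
      have havail : (A \ (W''.image h)).Nonempty := by
        apply Finset.card_pos.mp
        have h1 : (A ∩ (W''.image h)).card ≤ (M'.image h).card := Finset.card_le_card himg
        have h2 : (M'.image h).card ≤ M'.card := Finset.card_image_le
        have h3 : (A \ (W''.image h)).card + (A ∩ (W''.image h)).card = A.card :=
          Finset.card_sdiff_add_card_inter A (W''.image h)
        omega
      obtain ⟨u₀, hu₀⟩ := havail
      obtain ⟨hu₀A, hu₀img⟩ := Finset.mem_sdiff.mp hu₀
      refine ⟨Function.update h v₀ u₀, ?_, ?_⟩
      · intro x hx y hy hxy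
        simp only [Finset.mem_coe] at hx hy
        by_cases hxv : x = v₀ <;> by_cases hyv : y = v₀
        · rw [hxv, hyv]
        · exfalso
          rw [hxv] at hxy
          rw [Function.update_self, Function.update_of_ne hyv] at hxy
          exact hu₀img (Finset.mem_image.mpr ⟨y, Finset.mem_erase.mpr ⟨hyv, hy⟩, hxy.symm⟩)
        · exfalso
          rw [hyv] at hxy
          rw [Function.update_self, Function.update_of_ne hxv] at hxy
          exact hu₀img (Finset.mem_image.mpr ⟨x, Finset.mem_erase.mpr ⟨hxv, hx⟩, hxy⟩)
        · rw [Function.update_of_ne hxv, Function.update_of_ne hyv] at hxy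
          exact hinj (Finset.mem_coe.mpr (Finset.mem_erase.mpr ⟨hxv, hx⟩))
            (Finset.mem_coe.mpr (Finset.mem_erase.mpr ⟨hyv, hy⟩)) hxy
      · intro v hv
        by_cases hvv : v = v₀
        · subst hvv
          rw [Function.update_self]
          exact ⟨Finset.mem_of_mem_filter u₀ hu₀A, (Finset.mem_filter.mp hu₀A).2⟩
        · rw [Function.update_of_ne hvv]
          exact hprop v (Finset.mem_erase.mpr ⟨hvv, hv⟩)
  obtain ⟨h, hinj, hprop⟩ := key W.card W (Finset.Subset.refl W) rfl
  -- Step 2: strictness via the vertex with maximal b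
  obtain ⟨vb, hvb, hvbmax⟩ := Finset.exists_max_image W b hWne
  set Astar := U.filter (fun u => l u ≤ b vb ∧ b vb ≤ r u) with hAstar
  have hAstarne : 1 ≤ Astar.card := by
    have h1 : vb ∈ W.filter (fun w => l w ≤ b vb ∧ b vb ≤ r w) :=
      Finset.mem_filter.mpr ⟨hvb, le_trans (hM4 vb hvb).1 (hab vb hvb), (hM4 vb hvb).2⟩
    have h2 := hM3b vb hvb
    rw [← hAstar] at h2
    have h3 : 1 ≤ (W.filter (fun w => l w ≤ b vb ∧ b vb ≤ r w)).card :=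
      Finset.card_pos.mpr ⟨vb, h1⟩
    omega
  have himgsub : W.image h ⊆ U \ Astar := by
    intro u hu
    obtain ⟨w, hwW, rfl⟩ := Finset.mem_image.mp hu
    obtain ⟨hhU, hlh, hrh⟩ := hprop w hwW
    refine Finset.mem_sdiff.mpr ⟨hhU, fun hcon => ?_⟩
    have h1 : r (h w) < b w := hM2 w hwW (h w) hhU hlh hrh
    have h2 : b vb ≤ r (h w) := (Finset.mem_filter.mp hcon).2.2
    have h3 : b w ≤ b vb := hvbmax w hwW
    linarith
  have h1 : W.card = (W.image h).card := (Finset.card_image_of_injOn hinj).symm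
  have h2 : (W.image h).card ≤ (U \ Astar).card := Finset.card_le_card himgsub
  have h3 : (U \ Astar).card = U.card - Astar.card := by
    rw [hAstar]; exact Finset.card_sdiff_of_subset (Finset.filter_subset _ _)
  have h4 : Astar.card ≤ U.card := by
    rw [hAstar]; exact Finset.card_le_card (Finset.filter_subset _ _)
  omega

lemma cov_insert {S : Finset V} {v : V} (hv : v ∉ S) (x : ℝ) :
    cov l r (insert v S) x = cov l r S x + (if l v ≤ x ∧ x ≤ r v then 1 else 0) := by
  classical
  unfold cov
  rw [Finset.filter_insert]
  by_cases h : l v ≤ x ∧ x ≤ r v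
  · rw [if_pos h, if_pos h, Finset.card_insert_of_notMem (fun hc => hv (Finset.mem_of_mem_filter v hc))]
  · rw [if_neg h, if_neg h, Nat.add_zero]

lemma cov_erase {S : Finset V} {u : V} (hu : u ∈ S) (x : ℝ) :
    cov l r S x = cov l r (S.erase u) x + (if l u ≤ x ∧ x ≤ r u then 1 else 0) := by
  classical
  have h1 : cov l r (insert u (S.erase u)) x
      = cov l r (S.erase u) x + (if l u ≤ x ∧ x ≤ r u then 1 else 0) :=
    cov_insert (Finset.notMem_erase u S) x
  rw [Finset.insert_erase hu] at h1
  exact h1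

/-- additivity of cov over the partition S = (S \ S') ∪ (S ∩ S') -/
lemma cov_split (S S' : Finset V) (x : ℝ) :
    cov l r S x = cov l r (S \ S') x + cov l r (S ∩ S') x := by
  classical
  unfold cov
  rw [← Finset.card_union_of_disjoint, ← Finset.filter_union, Finset.sdiff_union_inter]
  exact Finset.disjoint_filter_filter (Finset.disjoint_sdiff_inter S S')

/-- Key counting lemma: if nothing can be added and no swap is possible,
then S' \ S is strictly smaller than S \ S'. -/
lemma lemma_C
    (hlr : ∀ v, l v ≤ r v)
    (hadj : ∀ u v, G.Adj u v ↔ u ≠ v ∧ max (l u) (l v) ≤ min (r u) (r v))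
    {S S' : Finset V} (hS : ColSet G c S) (hS' : ColSet G c S')
    (hWne : (S' \ S).Nonempty)
    (hnoadd : ∀ v ∈ S' \ S, ¬ ColSet G c (insert v S))
    (hnoswap : ∀ u ∈ S \ S', ∀ v ∈ S' \ S, ¬ ColSet G c (insert v (S.erase u))) :
    (S' \ S).card < (S \ S').card := by
  classical
  have covS : ∀ x, cov l r S x ≤ c := cov_le_of_colset hadj hS
  have covS' : ∀ x, cov l r S' x ≤ c := cov_le_of_colset hadj hS'
  -- tight witness for each non-addable v
  have hwit : ∀ v ∈ S' \ S, ∃ x, cov l r S x = c ∧ l v ≤ x ∧ x ≤ r v := by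
    intro v hv
    have hvS : v ∉ S := (Finset.mem_sdiff.mp hv).2
    by_contra hcon
    push_neg at hcon
    apply hnoadd v hv
    apply colset_of_cov hlr hadj
    intro x
    rw [cov_insert hvS x]
    by_cases hx : l v ≤ x ∧ x ≤ r v
    · rw [if_pos hx]
      have h1 := covS x
      have h2 : cov l r S x ≠ c := fun hc =>
        absurd hx.2 (not_le.mpr (hcon x hc hx.1))
      omega
    · rw [if_neg hx]
      simpa using covS x
  -- choose a v and b v
  have hchoose : ∀ v, ∃ av bv, v ∈ S' \ S →
      (cov l r S av = c ∧ l v ≤ av ∧ av ≤ r v) ∧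
      (cov l r S bv = c ∧ l v ≤ bv ∧ bv ≤ r v) ∧
      (∀ x, (cov l r S x = c ∧ l v ≤ x ∧ x ≤ r v) → av ≤ x ∧ x ≤ bv) := by
    intro v
    by_cases hv : v ∈ S' \ S
    · obtain ⟨x₀, hx₀⟩ := hwit v hv
      obtain ⟨av, hav, havmin⟩ := exists_min_tight S covS v x₀ hx₀
      obtain ⟨bv, hbv, hbvmax⟩ := exists_max_tight S covS v x₀ hx₀
      exact ⟨av, bv, fun _ => ⟨hav, hbv, fun x hx => ⟨havmin x hx, hbvmax x hx⟩⟩⟩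
    · exact ⟨0, 0, fun h => absurd h hv⟩
  choose a b hP using hchoose
  -- escape points: for each u ∈ S \ S', v ∈ S' \ S there is a tight point of v avoiding u
  have hesc : ∀ u ∈ S \ S', ∀ v ∈ S' \ S,
      ∃ x, cov l r S x = c ∧ l v ≤ x ∧ x ≤ r v ∧ ¬(l u ≤ x ∧ x ≤ r u) := by
    intro u hu v hv
    have huS : u ∈ S := (Finset.mem_sdiff.mp hu).1
    have hvS : v ∉ S := (Finset.mem_sdiff.mp hv).2
    have hvSe : v ∉ S.erase u := fun hc => hvS (Finset.mem_of_mem_erase hc)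
    by_contra hcon
    push_neg at hcon
    apply hnoswap u hu v hv
    apply colset_of_cov hlr hadj
    intro x
    rw [cov_insert hvSe x]
    have herase : cov l r (S.erase u) x + (if l u ≤ x ∧ x ≤ r u then 1 else 0) = cov l r S x :=
      (cov_erase huS x).symm
    by_cases hx : l v ≤ x ∧ x ≤ r v
    · rw [if_pos hx]
      by_cases hux : l u ≤ x ∧ x ≤ r u
      · rw [if_pos hux] at herase
        have := covS x
        omega
      · -- x not covered by u : then x is not tight
        have h1 : cov l r S x ≠ c := by
          intro hc
          obtain h2 := hcon x hc hx.1 hx.2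
          exact hux h2
        rw [if_neg hux] at herase
        have := covS x
        omega
    · rw [if_neg hx]
      have h1 : cov l r (S.erase u) x ≤ cov l r S x := by omega
      have := covS x
      omega
  -- counting hypothesis at tight points
  have hM3 : ∀ x, cov l r S x = c →
      ((S' \ S).filter (fun w => l w ≤ x ∧ x ≤ r w)).card
        ≤ ((S \ S').filter (fun u => l u ≤ x ∧ x ≤ r u)).card := by
    intro x hx
    have h1 : cov l r S x = cov l r (S \ S') x + cov l r (S ∩ S') x := cov_split S S' x
    have h2 : cov l r S' x = cov l r (S' \ S) x + cov l r (S' ∩ S) x := cov_split S' S x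
    have h3 : S' ∩ S = S ∩ S' := Finset.inter_comm S' S
    rw [h3] at h2
    have h4 := covS' x
    show cov l r (S' \ S) x ≤ cov l r (S \ S') x
    omega
  -- apply lemma M
  apply lemma_M (l := l) (r := r) (S \ S') (S' \ S) a b
  · intro v hv
    obtain ⟨hav, hbv, hminmax⟩ := hP v hv
    exact (hminmax (b v) hbv).1
  · intro v hv
    obtain ⟨hav, hbv, _⟩ := hP v hv
    exact ⟨hav.2.1, hbv.2.2⟩
  · intro v hv u hu hlu hru
    obtain ⟨hav, hbv, hminmax⟩ := hP v hv
    obtain ⟨x, hx1, hx2, hx3, hx4⟩ := hesc u hu v hv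
    have hax : a v ≤ x ∧ x ≤ b v := hminmax x ⟨hx1, hx2, hx3⟩
    by_contra hcon
    push_neg at hcon
    -- r u ≥ b v; u covers a v so u covers all of [a v, b v] ∋ x, contradiction
    exact hx4 ⟨le_trans hlu hax.1, le_trans hax.2 hcon⟩
  · intro v hv
    obtain ⟨hav, _, _⟩ := hP v hv
    exact hM3 (a v) hav.1
  · intro v hv
    obtain ⟨_, hbv, _⟩ := hP v hv
    exact hM3 (b v) hbv.1
  · exact hWne

lemma card_symmDiff (A B : Finset V) :
    (symmDiff A B).card = (A \ B).card + (B \ A).card := by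
  rw [symmDiff_def]
  exact Finset.card_union_of_disjoint (disjoint_sdiff_sdiff)

lemma symmDiff_card_comm (A B : Finset V) : (symmDiff A B).card = (symmDiff B A).card := by
  rw [symmDiff_comm]

lemma card_symmDiff_insert {S S' : Finset V} {v : V} (hv : v ∈ S' \ S) :
    (symmDiff (insert v S) S').card + 1 = (symmDiff S S').card := by
  obtain ⟨hvS', hvS⟩ := Finset.mem_sdiff.mp hv
  rw [card_symmDiff, card_symmDiff]
  rw [Finset.insert_sdiff_of_mem S hvS', Finset.sdiff_insert]
  have h1 : v ∈ S' \ S := hv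
  rw [Finset.card_erase_of_mem h1]
  have h2 : 1 ≤ (S' \ S).card := Finset.card_pos.mpr ⟨v, h1⟩
  omega

lemma card_symmDiff_erase {S S' : Finset V} {u : V} (hu : u ∈ S \ S') :
    (symmDiff (S.erase u) S').card + 1 = (symmDiff S S').card := by
  obtain ⟨huS, huS'⟩ := Finset.mem_sdiff.mp hu
  rw [card_symmDiff, card_symmDiff]
  have h1 : S.erase u \ S' = (S \ S').erase u := by
    ext x
    simp only [Finset.mem_erase, Finset.mem_sdiff]
    tauto
  have h2 : S' \ S.erase u = S' \ S := by
    ext x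
    simp only [Finset.mem_erase, Finset.mem_sdiff]
    constructor
    · rintro ⟨hx1, hx2⟩
      refine ⟨hx1, fun hxS => hx2 ⟨fun hxu => ?_, hxS⟩⟩
      subst hxu; exact huS' hx1
    · rintro ⟨hx1, hx2⟩
      exact ⟨hx1, fun hc => hx2 hc.2⟩
  rw [h1, h2, Finset.card_erase_of_mem hu]
  have h3 : 1 ≤ (S \ S').card := Finset.card_pos.mpr ⟨u, hu⟩
  omega

lemma symmDiff_card_triangle (A B C : Finset V) :
    (symmDiff A C).card ≤ (symmDiff A B).card + (symmDiff B C).card := by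
  have h := symmDiff_triangle A B C
  calc (symmDiff A C).card ≤ (symmDiff A B ∪ symmDiff B C).card := Finset.card_le_card h
    _ ≤ _ := Finset.card_union_le _ _

lemma tarStep_insert {S : Finset V} {v : V} (hv : v ∉ S)
    (h1 : ColSet G c S) (h2 : ColSet G c (insert v S)) (hk : k ≤ S.card) :
    TARStep G c k S (insert v S) := by
  refine ⟨h1, h2, hk, le_trans hk (Finset.card_le_card (Finset.subset_insert v S)), ?_⟩
  rw [card_symmDiff]
  have e1 : S \ insert v S = ∅ := Finset.sdiff_eq_empty_iff_subset.mpr (Finset.subset_insert v S)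
  have e2 : insert v S \ S = {v} := by
    rw [Finset.insert_sdiff_of_notMem _ hv, Finset.sdiff_self]
    simp
  rw [e1, e2]
  simp

lemma tarStep_symm {A B : Finset V} (h : TARStep G c k A B) : TARStep G c k B A := by
  obtain ⟨h1, h2, h3, h4, h5⟩ := h
  refine ⟨h2, h1, h4, h3, ?_⟩
  rw [symmDiff_card_comm]; exact h5

lemma tarStep_erase {S : Finset V} {u : V} (hu : u ∈ S)
    (h1 : ColSet G c S) (hk : k ≤ (S.erase u).card) :
    TARStep G c k S (S.erase u) := by
  have h2 : ColSet G c (S.erase u) := h1.mono (Finset.erase_subset u S)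
  refine ⟨h1, h2, le_trans hk (Finset.card_le_card (Finset.erase_subset u S)), hk, ?_⟩
  rw [card_symmDiff]
  have e1 : S \ S.erase u = {u} := by
    ext x
    simp only [Finset.mem_sdiff, Finset.mem_erase, Finset.mem_singleton]
    constructor
    · rintro ⟨hx1, hx2⟩
      by_contra hne
      exact hx2 ⟨hne, hx1⟩
    · rintro rfl
      exact ⟨hu, fun hc => hc.1 rfl⟩
  have e2 : S.erase u \ S = ∅ :=
    Finset.sdiff_eq_empty_iff_subset.mpr (Finset.erase_subset u S)
  rw [e1, e2]
  simp

lemma tarSeq_single {S : Finset V} : TARSeq G c k S S [S] := by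
  refine ⟨rfl, rfl, List.isChain_singleton S⟩

lemma tarSeq_cons {S A S' : Finset V} {t : List (Finset V)}
    (hstep : TARStep G c k S A) (hseq : TARSeq G c k A S' t) :
    TARSeq G c k S S' (S :: t) := by
  obtain ⟨h1, h2, h3⟩ := hseq
  refine ⟨rfl, ?_, ?_⟩
  · cases t with
    | nil => simp at h1
    | cons x xs => rw [List.getLast?_cons_cons]; exact h2
  · show List.IsChain _ _
    rw [List.isChain_cons]
    refine ⟨fun y hy => ?_, h3⟩
    rw [h1] at hy
    simp only [Option.mem_def, Option.some.injEq] at hy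
    subst hy
    exact hstep
  
lemma tarSeq_reverse {S S' : Finset V} {t : List (Finset V)}
    (hseq : TARSeq G c k S S' t) : TARSeq G c k S' S t.reverse := by
  obtain ⟨h1, h2, h3⟩ := hseq
  refine ⟨?_, ?_, ?_⟩
  · rw [List.head?_reverse]; exact h2
  · rw [List.getLast?_reverse]; exact h1
  · show List.IsChain _ _
    rw [List.isChain_reverse]
    apply List.IsChain.imp _ h3
    intro a b hab
    exact tarStep_symm hab

lemma tarSeq_concat {S A S' : Finset V} {t : List (Finset V)}
    (hseq : TARSeq G c k S A t) (hstep : TARStep G c k A S') :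
    TARSeq G c k S S' (t ++ [S']) := by
  have h := tarSeq_cons (tarStep_symm hstep) (tarSeq_reverse hseq)
  have h2 := tarSeq_reverse h
  simpa using h2

/-- lower bound: any TAR sequence has at least symmdiff-many steps -/
lemma tarSeq_lower : ∀ (t : List (Finset V)) (S S' : Finset V),
    TARSeq G c k S S' t → (symmDiff S S').card + 1 ≤ t.length := by
  intro t
  induction t with
  | nil => intro S S' h; simp [TARSeq] at h
  | cons A t IH =>
    intro S S' h
    obtain ⟨h1, h2, h3⟩ := h
    have hSA : A = S := by simpa using h1
    subst hSA
    cases t with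
    | nil =>
      have : A = S' := by simpa using h2
      subst this
      simp [symmDiff_self]
    | cons B t' =>
      have hstep : TARStep G c k A B := (List.isChain_cons_cons.mp h3).1
      have hseq : TARSeq G c k B S' (B :: t') := by
        refine ⟨rfl, ?_, (List.isChain_cons_cons.mp h3).2⟩
        rw [List.getLast?_cons_cons] at h2
        exact h2
      have hIH := IH B S' hseq
      have htri := symmDiff_card_triangle A B S'
      have h5 := hstep.2.2.2.2
      simp only [List.length_cons] at hIH ⊢
      omega



lemma tarStep_insert_rev {S' : Finset V} {w : V} (hw : w ∉ S')
    (hcol : ColSet G c (insert w S')) (hk' : k ≤ S'.card) :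
    TARStep G c k (insert w S') S' := by
  have hkk : k ≤ ((insert w S').erase w).card := by
    rw [Finset.erase_insert hw]; exact hk'
  have h := tarStep_erase (Finset.mem_insert_self w S') hcol hkk
  rw [Finset.erase_insert hw] at h
  exact h

lemma notlocked_of_card_ne {U T : Finset V} (h : T.card ≠ k) : ¬ LockedIn G c k U T :=
  fun hl => h hl.1

lemma tarSeq_del : ∀ m (S S' : Finset V), (S \ S').card = m → S' ⊆ S → ColSet G c S →
    k ≤ S'.card → ∃ t, TARSeq G c k S S' t ∧ t.length = m + 1 := by
  intro m
  induction m using Nat.strong_induction_on with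
  | _ m IH =>
  intro S S' hm hsub hS hk'
  rcases Finset.eq_empty_or_nonempty (S \ S') with he | ⟨u, hu⟩
  · have heq : S = S' :=
      Finset.Subset.antisymm (Finset.sdiff_eq_empty_iff_subset.mp he) hsub
    subst heq
    refine ⟨[S], tarSeq_single, ?_⟩
    rw [he] at hm
    simp at hm
    simp [← hm]
  · have huS : u ∈ S := (Finset.mem_sdiff.mp hu).1
    have huS' : u ∉ S' := (Finset.mem_sdiff.mp hu).2
    have hsub' : S' ⊆ S.erase u := fun x hx =>
      Finset.mem_erase.mpr ⟨fun h => huS' (h ▸ hx), hsub hx⟩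
    have hm1 : 1 ≤ m := by
      rw [← hm]; exact Finset.card_pos.mpr ⟨u, hu⟩
    have hcard : (S.erase u \ S').card = m - 1 := by
      have h1 : S.erase u \ S' = (S \ S').erase u := by
        ext x
        simp only [Finset.mem_erase, Finset.mem_sdiff]
        tauto
      rw [h1, Finset.card_erase_of_mem hu, hm]
    obtain ⟨t, ht, hlen⟩ := IH (m - 1) (by omega) (S.erase u) S' hcard hsub'
      (hS.mono (Finset.erase_subset u S)) hk'
    have hstep : TARStep G c k S (S.erase u) :=
      tarStep_erase huS hS (le_trans hk' (Finset.card_le_card hsub'))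
    refine ⟨S :: t, tarSeq_cons hstep ht, ?_⟩
    simp only [List.length_cons, hlen]
    omega

lemma tarSeq_add (S S' : Finset V) (hsub : S ⊆ S') (hS' : ColSet G c S')
    (hk : k ≤ S.card) : ∃ t, TARSeq G c k S S' t ∧ t.length = (S' \ S).card + 1 := by
  obtain ⟨t, ht, hlen⟩ := tarSeq_del (S' \ S).card S' S rfl hsub hS' hk
  exact ⟨t.reverse, tarSeq_reverse ht, by simpa using hlen⟩

lemma main_upper
    (hlr : ∀ v, l v ≤ r v)
    (hadj : ∀ u v, G.Adj u v ↔ u ≠ v ∧ max (l u) (l v) ≤ min (r u) (r v)) :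
    ∀ n (S S' : Finset V), (symmDiff S S').card = n →
    ColSet G c S → ColSet G c S' → k ≤ S.card → k ≤ S'.card →
    ¬ LockedIn G c k (S ∪ S') S → ¬ LockedIn G c k (S ∪ S') S' →
    ∃ t, TARSeq G c k S S' t ∧ t.length = n + 1 := by
  intro n
  induction n using Nat.strong_induction_on with
  | _ n IH =>
  intro S S' hn hS hS' hk hk' hnl hnl'
  rw [card_symmDiff] at hn
  by_cases hss : S ⊆ S'
  · -- pure additions
    have h0 : (S \ S').card = 0 := by
      rw [Finset.card_eq_zero, Finset.sdiff_eq_empty_iff_subset]; exact hss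
    obtain ⟨t, ht, hlen⟩ := tarSeq_add S S' hss hS' hk
    exact ⟨t, ht, by omega⟩
  by_cases hss' : S' ⊆ S
  · -- pure deletions
    have h0 : (S' \ S).card = 0 := by
      rw [Finset.card_eq_zero, Finset.sdiff_eq_empty_iff_subset]; exact hss'
    obtain ⟨t, ht, hlen⟩ := tarSeq_del (S \ S').card S S' rfl hss' hS hk'
    exact ⟨t, ht, by omega⟩
  have huNe : (S \ S').Nonempty := Finset.sdiff_nonempty.mpr hss
  have hvNe : (S' \ S).Nonempty := Finset.sdiff_nonempty.mpr hss'
  have hp1 : 1 ≤ (S \ S').card := Finset.card_pos.mpr huNe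
  have hq1 : 1 ≤ (S' \ S).card := Finset.card_pos.mpr hvNe
  by_cases hS'k : S'.card = k
  · -- |S'| = k : use the witness from hnl' and recurse towards S' ∪ {w}
    have hL : ¬ (∀ T ⊆ S ∪ S', ColSet G c T → S' ⊆ T → T = S') := by
      intro hmax; exact hnl' ⟨hS'k, hS', Finset.subset_union_right, hmax⟩
    push_neg at hL
    obtain ⟨T, hT1, hT2, hT3, hT4⟩ := hL
    obtain ⟨w, hwT, hwS'⟩ := Finset.exists_of_ssubset (hT3.ssubset_of_ne (Ne.symm hT4))
    have hwS : w ∈ S := by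
      have := hT1 hwT
      rw [Finset.mem_union] at this
      exact this.resolve_right hwS'
    have hwmem : w ∈ S \ S' := Finset.mem_sdiff.mpr ⟨hwS, hwS'⟩
    have hcol : ColSet G c (insert w S') := hT2.mono (Finset.insert_subset hwT hT3)
    have hsymm : (symmDiff S (insert w S')).card = n - 1 := by
      have h1 := card_symmDiff_insert (S := S') (S' := S) (v := w) hwmem
      simp only [card_symmDiff] at h1 ⊢
      omega
    have hunion : S ∪ insert w S' = S ∪ S' := by
      ext x
      simp only [Finset.mem_union, Finset.mem_insert]
      constructor
      · rintro (h | rfl | h)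
        · exact Or.inl h
        · exact Or.inl hwS
        · exact Or.inr h
      · rintro (h | h)
        · exact Or.inl h
        · exact Or.inr (Or.inr h)
    obtain ⟨t, ht, hlen⟩ := IH (n - 1) (by omega) S (insert w S') hsymm hS hcol hk
      (le_trans hk' (Finset.card_le_card (Finset.subset_insert w S')))
      (by rw [hunion]; exact hnl)
      (notlocked_of_card_ne (by rw [Finset.card_insert_of_notMem hwS']; omega))
    have hstep : TARStep G c k (insert w S') S' := tarStep_insert_rev hwS' hcol hk'
    refine ⟨t ++ [S'], tarSeq_concat ht hstep, ?_⟩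
    simp only [List.length_append, List.length_singleton, hlen]
    omega
  have hS'k2 : k < S'.card := lt_of_le_of_ne hk' (Ne.symm hS'k)
  by_cases haddable : ∃ v ∈ S' \ S, ColSet G c (insert v S)
  · -- add a vertex of S' \ S
    obtain ⟨v, hv, hcol⟩ := haddable
    have hvS : v ∉ S := (Finset.mem_sdiff.mp hv).2
    have hsymm : (symmDiff (insert v S) S').card = n - 1 := by
      have h1 := card_symmDiff_insert (S := S) (S' := S') (v := v) hv
      simp only [card_symmDiff] at h1 ⊢
      omega
    obtain ⟨t, ht, hlen⟩ := IH (n - 1) (by omega) (insert v S) S' hsymm hcol hS'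
      (le_trans hk (Finset.card_le_card (Finset.subset_insert v S))) hk'
      (notlocked_of_card_ne (by rw [Finset.card_insert_of_notMem hvS]; omega))
      (notlocked_of_card_ne hS'k)
    refine ⟨S :: t, tarSeq_cons (tarStep_insert hvS hS hcol hk) ht, ?_⟩
    simp only [List.length_cons, hlen]
    omega
  push_neg at haddable
  have hSk : k < S.card := by
    rcases lt_or_eq_of_le hk with h | h
    · exact h
    exfalso
    apply hnl
    refine ⟨h.symm, hS, Finset.subset_union_left, ?_⟩
    intro T hT1 hT2 hT3
    by_contra hTne
    obtain ⟨w, hwT, hwS⟩ := Finset.exists_of_ssubset (hT3.ssubset_of_ne (Ne.symm hTne))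
    have hwS' : w ∈ S' \ S := by
      have := hT1 hwT
      rw [Finset.mem_union] at this
      exact Finset.mem_sdiff.mpr ⟨this.resolve_left hwS, hwS⟩
    exact haddable w hwS' (hT2.mono (Finset.insert_subset hwT hT3))
  by_cases hSk2 : S.card = k + 1
  · by_cases hS'k3 : S'.card = k + 1
    · -- the core case |S| = |S'| = k+1
      by_cases haddable' : ∃ u ∈ S \ S', ColSet G c (insert u S')
      · -- S' can absorb a vertex of S: recurse to S' ∪ {u} and strip it at the end
        obtain ⟨u, hu, hcol⟩ := haddable'
        have huS' : u ∉ S' := (Finset.mem_sdiff.mp hu).2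
        have hsymm : (symmDiff S (insert u S')).card = n - 1 := by
          have h1 := card_symmDiff_insert (S := S') (S' := S) (v := u) hu
          simp only [card_symmDiff] at h1 ⊢
          omega
        obtain ⟨t, ht, hlen⟩ := IH (n - 1) (by omega) S (insert u S') hsymm hS hcol hk
          (le_trans hk' (Finset.card_le_card (Finset.subset_insert u S')))
          (notlocked_of_card_ne (by omega))
          (notlocked_of_card_ne (by rw [Finset.card_insert_of_notMem huS']; omega))
        refine ⟨t ++ [S'], tarSeq_concat ht (tarStep_insert_rev huS' hcol hk'), ?_⟩
        simp only [List.length_append, List.length_singleton, hlen]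
        omega
      push_neg at haddable'
      by_cases hswap : ∃ u ∈ S \ S', ∃ v ∈ S' \ S, ColSet G c (insert v (S.erase u))
      · -- swap on the S side
        obtain ⟨u, hu, v, hv, hcol⟩ := hswap
        have huS : u ∈ S := (Finset.mem_sdiff.mp hu).1
        have hvS : v ∉ S := (Finset.mem_sdiff.mp hv).2
        have hvS' : v ∈ S' := (Finset.mem_sdiff.mp hv).1
        have hvSe : v ∉ S.erase u := fun h => hvS (Finset.mem_of_mem_erase h)
        have hcardE : (S.erase u).card = k := by
          rw [Finset.card_erase_of_mem huS]; omega
        have hcolE : ColSet G c (S.erase u) := hS.mono (Finset.erase_subset u S)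
        have hstep1 : TARStep G c k S (S.erase u) :=
          tarStep_erase huS hS (by omega)
        have hstep2 : TARStep G c k (S.erase u) (insert v (S.erase u)) :=
          tarStep_insert hvSe hcolE hcol (by omega)
        have hsymm : (symmDiff (insert v (S.erase u)) S').card = n - 2 := by
          have h1 := card_symmDiff_erase (S := S) (S' := S') (u := u) hu
          have h2 := card_symmDiff_insert (S := S.erase u) (S' := S') (v := v)
            (Finset.mem_sdiff.mpr ⟨hvS', hvSe⟩)
          simp only [card_symmDiff] at h1 h2 ⊢
          omega
        have hn2 : 2 ≤ n := by omega
        obtain ⟨t, ht, hlen⟩ := IH (n - 2) (by omega) (insert v (S.erase u)) S' hsymm hcol hS'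
          (by rw [Finset.card_insert_of_notMem hvSe]; omega) hk'
          (notlocked_of_card_ne (by rw [Finset.card_insert_of_notMem hvSe]; omega))
          (notlocked_of_card_ne (by omega))
        refine ⟨S :: S.erase u :: t, tarSeq_cons hstep1 (tarSeq_cons hstep2 ht), ?_⟩
        simp only [List.length_cons, hlen]
        omega
      push_neg at hswap
      by_cases hswap' : ∃ v ∈ S' \ S, ∃ u ∈ S \ S', ColSet G c (insert u (S'.erase v))
      · -- swap on the S' side: recurse to (S' \ {v}) ∪ {u}, then two final steps
        obtain ⟨v, hv, u, hu, hcol⟩ := hswap'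
        have hvS' : v ∈ S' := (Finset.mem_sdiff.mp hv).1
        have hvS : v ∉ S := (Finset.mem_sdiff.mp hv).2
        have huS : u ∈ S := (Finset.mem_sdiff.mp hu).1
        have huS' : u ∉ S' := (Finset.mem_sdiff.mp hu).2
        have huSe : u ∉ S'.erase v := fun h => huS' (Finset.mem_of_mem_erase h)
        have hcardE : (S'.erase v).card = k := by
          rw [Finset.card_erase_of_mem hvS']; omega
        have hcolE : ColSet G c (S'.erase v) := hS'.mono (Finset.erase_subset v S')
        have hsymm : (symmDiff S (insert u (S'.erase v))).card = n - 2 := by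
          have h1 := card_symmDiff_erase (S := S') (S' := S) (u := v)
            (Finset.mem_sdiff.mpr ⟨hvS', hvS⟩)
          have h2 := card_symmDiff_insert (S := S'.erase v) (S' := S) (v := u)
            (Finset.mem_sdiff.mpr ⟨huS, huSe⟩)
          simp only [card_symmDiff] at h1 h2 ⊢
          omega
        have hn2 : 2 ≤ n := by omega
        obtain ⟨t, ht, hlen⟩ := IH (n - 2) (by omega) S (insert u (S'.erase v)) hsymm hS hcol hk
          (by rw [Finset.card_insert_of_notMem huSe]; omega)
          (notlocked_of_card_ne (by omega))
          (notlocked_of_card_ne (by rw [Finset.card_insert_of_notMem huSe]; omega))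
        have hstepA : TARStep G c k (insert u (S'.erase v)) (S'.erase v) :=
          tarStep_insert_rev huSe hcol (by omega)
        have hstepB : TARStep G c k (S'.erase v) S' :=
          tarStep_symm (tarStep_erase hvS' hS' (by omega))
        refine ⟨(t ++ [S'.erase v]) ++ [S'],
          tarSeq_concat (tarSeq_concat ht hstepA) hstepB, ?_⟩
        simp only [List.length_append, List.length_singleton, hlen]
        omega
      · -- no swap on either side: contradiction with the counting lemma
        exfalso
        push_neg at hswap'
        have h1 := lemma_C hlr hadj hS hS' hvNe haddable hswap
        have h2 := lemma_C hlr hadj hS' hS huNe haddable'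
          (fun u hu v hv => hswap' u hu v hv)
        omega
    · -- |S'| > k+1 : strip a vertex of S' \ S from the target side
      have hS'k4 : k + 1 < S'.card := lt_of_le_of_ne (by omega) (Ne.symm hS'k3)
      obtain ⟨v, hv⟩ := hvNe
      have hvS' : v ∈ S' := (Finset.mem_sdiff.mp hv).1
      have hvS : v ∉ S := (Finset.mem_sdiff.mp hv).2
      have hsymm : (symmDiff S (S'.erase v)).card = n - 1 := by
        have h1 := card_symmDiff_erase (S := S') (S' := S) (u := v)
          (Finset.mem_sdiff.mpr ⟨hvS', hvS⟩)
        simp only [card_symmDiff] at h1 ⊢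
        omega
      have hcardE : (S'.erase v).card = S'.card - 1 := Finset.card_erase_of_mem hvS'
      obtain ⟨t, ht, hlen⟩ := IH (n - 1) (by omega) S (S'.erase v) hsymm hS
        (hS'.mono (Finset.erase_subset v S')) hk (by omega)
        (notlocked_of_card_ne (by omega))
        (notlocked_of_card_ne (by omega))
      have hstep : TARStep G c k (S'.erase v) S' :=
        tarStep_symm (tarStep_erase hvS' hS' (by omega))
      refine ⟨t ++ [S'], tarSeq_concat ht hstep, ?_⟩
      simp only [List.length_append, List.length_singleton, hlen]
      omega
  · -- |S| > k+1 : delete any vertex of S \ S'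
    have hSk3 : k + 1 < S.card := lt_of_le_of_ne (by omega) (Ne.symm hSk2)
    obtain ⟨u, hu⟩ := huNe
    have huS : u ∈ S := (Finset.mem_sdiff.mp hu).1
    have hsymm : (symmDiff (S.erase u) S').card = n - 1 := by
      have h1 := card_symmDiff_erase (S := S) (S' := S') (u := u) hu
      simp only [card_symmDiff] at h1 ⊢
      omega
    have hcardE : (S.erase u).card = S.card - 1 := Finset.card_erase_of_mem huS
    obtain ⟨t, ht, hlen⟩ := IH (n - 1) (by omega) (S.erase u) S' hsymm
      (hS.mono (Finset.erase_subset u S)) hS' (by omega) hk'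
      (notlocked_of_card_ne (by omega))
      (notlocked_of_card_ne (by omega))
    refine ⟨S :: t, tarSeq_cons (tarStep_erase huS hS (by omega)) ht, ?_⟩
    simp only [List.length_cons, hlen]
    omega

end IntervalAux
end AuxProof

theorem interval_dist_no_locked {V : Type*} [DecidableEq V]
    (G : SimpleGraph V) (hG : IsIntervalGraph G) (c k : ℕ) (S S' : Finset V)
    (hS : ColSet G c S) (hS' : ColSet G c S')
    (hk : k ≤ S.card) (hk' : k ≤ S'.card)
    (hnl : ¬ LockedIn G c k (S ∪ S') S) (hnl' : ¬ LockedIn G c k (S ∪ S') S') :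
    TARDist G c k S S' = ((symmDiff S S').card : ℕ∞) := by
  obtain ⟨l, r, hlr, hadj⟩ := hG
  obtain ⟨t, ht, hlen⟩ := main_upper (G := G) (c := c) (k := k) hlr hadj
    (symmDiff S S').card S S' rfl hS hS' hk hk' hnl hnl'
  apply le_antisymm
  · apply sInf_le
    refine ⟨t, ht, ?_⟩
    rw [hlen]
    push_cast
    ring
  · apply le_sInf
    rintro m ⟨t', ht', hlen'⟩
    have hlb := tarSeq_lower t' S S' ht'
    have hcast : ((symmDiff S S').card : ℕ∞) + 1 ≤ (t'.length : ℕ∞) := by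
      have : (((symmDiff S S').card + 1 : ℕ) : ℕ∞) ≤ ((t'.length : ℕ) : ℕ∞) :=
        Nat.cast_le.mpr hlb
      push_cast at this
      exact this
    rw [hlen'] at hcast
    exact (WithTop.add_le_add_iff_right (by simp : (1 : ℕ∞) ≠ ⊤)).mp hcast
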